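/- arXiv:0912.0597 — 2 statements merged into one kernel-verified Lean document; each statement's English description precedes it below -/
import Mathlib

section
/- Let $(X,\mathcal{B})$ be a $t$-$(v,k,\lambda)$ design with $b$ blocks, let $s \le t$ be a positive integer, let $\lambda_s$ denote the number of blocks through any fixed $s$-element subset of $X$, and suppose $\binom{k}{s}$ divides $\lambda_s$. Consider the set of incident pairs $(T,B)$ where $B \in \mathcal{B}$ is a block and $T \subseteq B$ is an $s$-element subset. Then there exists a coloring $c$ of these incident pairs with $\binom{k}{s}$ colors such that: (i) for each block $B$, the map $T \mapsto c(T,B)$ is a bijection from the $s$-element subsets of $B$ to the set of colors, and (ii) for each $s$-element subset $T$ of $X$ and each color $\gamma$, the number of blocks $B$ containing $T$ with $c(T,B) = \gamma$ is exactly $\lambda_s / \binom{k}{s}$. -/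
open Finset

lemma dc {ι β : Type*} [DecidableEq β] (S : Finset ι) (A : ι → Finset β) (U : Finset β)
    (hU : ∀ i ∈ S, A i ⊆ U) :
    ∑ i ∈ S, (A i).card = ∑ T ∈ U, (S.filter fun i => T ∈ A i).card := by
  calc ∑ i ∈ S, (A i).card
      = ∑ i ∈ S, ∑ T ∈ U, if T ∈ A i then 1 else 0 := by
        refine Finset.sum_congr rfl fun i hi => ?_
        rw [Finset.sum_ite_mem, Finset.sum_const, (Finset.inter_eq_right).mpr (hU i hi)]
        simp
    _ = ∑ T ∈ U, ∑ i ∈ S, if T ∈ A i then 1 else 0 := Finset.sum_comm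
    _ = ∑ T ∈ U, (S.filter fun i => T ∈ A i).card := by
        refine Finset.sum_congr rfl fun T _ => ?_
        rw [Finset.card_filter]

lemma fibers_eq {β : Type*} (U : Finset β) (f : β → ℕ) (q : ℕ)
    (hle : ∀ T ∈ U, f T ≤ q) (hsum : ∑ T ∈ U, f T = q * U.card) :
    ∀ T ∈ U, f T = q := by
  by_contra hc
  push_neg at hc
  obtain ⟨x, hx, hne⟩ := hc
  have hlt : ∑ T ∈ U, f T < ∑ _T ∈ U, q :=
    Finset.sum_lt_sum hle ⟨x, hx, lt_of_le_of_ne (hle x hx) hne⟩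
  rw [Finset.sum_const, smul_eq_mul, hsum, Nat.mul_comm] at hlt
  exact lt_irrefl _ hlt

lemma hall_step {α : Type*} [DecidableEq α]
    (X : Finset α) (𝓑 : Finset (Finset α)) (s q m : ℕ) (hq : 0 < q)
    (A : Finset α → Finset (Finset α))
    (hA : ∀ B ∈ 𝓑, A B ⊆ X.powersetCard s)
    (hdegB : ∀ B ∈ 𝓑, (A B).card = m + 1)
    (hdegT : ∀ T ∈ X.powersetCard s, (𝓑.filter fun B => T ∈ A B).card = (m + 1) * q) :
    ∃ g : Finset α → Finset α,
      (∀ B ∈ 𝓑, g B ∈ A B) ∧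
      (∀ T ∈ X.powersetCard s, (𝓑.filter fun B => g B = T).card = q) := by
  classical
  set 𝒯 := X.powersetCard s with h𝒯
  -- Hall condition
  have hhall : ∀ S : Finset {B // B ∈ 𝓑},
      S.card ≤ (S.biUnion fun B => (A B.1) ×ˢ (Finset.univ : Finset (Fin q))).card := by
    intro S
    have hU : S.biUnion (fun B => (A B.1) ×ˢ (Finset.univ : Finset (Fin q)))
        = (S.biUnion fun B => A B.1) ×ˢ Finset.univ := by
      ext ⟨T, j⟩
      simp only [Finset.mem_biUnion, Finset.mem_product, Finset.mem_univ, and_true]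
    rw [hU, Finset.card_product, Finset.card_univ, Fintype.card_fin]
    set U := S.biUnion fun B => A B.1 with hUdef
    have hcount : ∑ B ∈ S, (A B.1).card = ∑ T ∈ U, (S.filter fun B => T ∈ A B.1).card :=
      dc S (fun B => A B.1) U (fun i hi => by rw [hUdef]; exact Finset.subset_biUnion_of_mem (fun B => A B.1) hi)
    have h1 : (m+1) * S.card = ∑ B ∈ S, (A B.1).card := by
      rw [Finset.sum_congr rfl fun B _ => hdegB B.1 B.2, Finset.sum_const, smul_eq_mul,
        Nat.mul_comm]
    have h2 : ∀ T ∈ U, (S.filter fun B => T ∈ A B.1).card ≤ (m+1) * q := by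
      intro T hT
      obtain ⟨B0, hB0, hTB0⟩ := Finset.mem_biUnion.mp hT
      have hT𝒯 : T ∈ 𝒯 := hA B0.1 B0.2 hTB0
      rw [← hdegT T hT𝒯]
      apply Finset.card_le_card_of_injOn (fun B => B.1)
      · intro B hB
        simp only [Finset.mem_filter] at hB ⊢
        exact Finset.mem_filter.mpr ⟨B.2, (Finset.mem_filter.mp hB).2⟩
      · intro a _ b _ h; exact Subtype.ext h
    have h3 : (m+1) * S.card ≤ (m+1) * (U.card * q) := by
      rw [h1, hcount]
      calc ∑ T ∈ U, (S.filter fun B => T ∈ A B.1).card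
          ≤ ∑ _T ∈ U, (m+1) * q := Finset.sum_le_sum h2
        _ = U.card * ((m+1) * q) := by rw [Finset.sum_const, smul_eq_mul]
        _ = (m+1) * (U.card * q) := by ring
    exact Nat.le_of_mul_le_mul_left h3 (Nat.succ_pos m)
  obtain ⟨f, hfinj, hf⟩ := (Finset.all_card_le_biUnion_card_iff_exists_injective _).mp hhall
  refine ⟨fun B => if h : B ∈ 𝓑 then (f ⟨B, h⟩).1 else ∅, ?_, ?_⟩
  · intro B hB
    simp only [dif_pos hB]
    have := hf ⟨B, hB⟩
    rw [Finset.mem_product] at this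
    exact this.1
  · set g : Finset α → Finset α := fun B => if h : B ∈ 𝓑 then (f ⟨B, h⟩).1 else ∅ with hgdef
    have hgmem : ∀ B ∈ 𝓑, g B ∈ A B := by
      intro B hB
      simp only [hgdef, dif_pos hB]
      have := hf ⟨B, hB⟩
      rw [Finset.mem_product] at this
      exact this.1
    have hle : ∀ T ∈ 𝒯, (𝓑.filter fun B => g B = T).card ≤ q := by
      intro T hT
      have : (𝓑.filter fun B => g B = T).card ≤ (Finset.univ : Finset (Fin q)).card := by
        apply Finset.card_le_card_of_injOn
          (fun B => if h : B ∈ 𝓑 then (f ⟨B, h⟩).2 else ⟨0, hq⟩)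
        · intro B _; exact Finset.mem_univ _
        · intro a ha b hb hab
          simp only [Finset.mem_coe, Finset.mem_filter] at ha hb
          simp only [dif_pos ha.1, dif_pos hb.1] at hab
          have hfst : (f ⟨a, ha.1⟩).1 = (f ⟨b, hb.1⟩).1 := by
            have h1 : g a = T := ha.2
            have h2 : g b = T := hb.2
            simp only [hgdef, dif_pos ha.1] at h1
            simp only [hgdef, dif_pos hb.1] at h2
            rw [h1, h2]
          have : f ⟨a, ha.1⟩ = f ⟨b, hb.1⟩ := Prod.ext hfst hab
          exact congrArg Subtype.val (hfinj this)
      simpa using this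
    have hsum : ∑ T ∈ 𝒯, (𝓑.filter fun B => g B = T).card = 𝓑.card :=
      (Finset.card_eq_sum_card_fiberwise fun B hB => hA B hB (hgmem B hB)).symm
    have hBcard : 𝓑.card = q * 𝒯.card := by
      have hcount : ∑ B ∈ 𝓑, (A B).card = ∑ T ∈ 𝒯, (𝓑.filter fun B => T ∈ A B).card :=
        dc 𝓑 A 𝒯 hA
      have e1 : ∑ B ∈ 𝓑, (A B).card = (m+1) * 𝓑.card := by
        rw [Finset.sum_congr rfl hdegB, Finset.sum_const, smul_eq_mul, Nat.mul_comm]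
      have e2 : ∑ T ∈ 𝒯, (𝓑.filter fun B => T ∈ A B).card = (m+1) * (q * 𝒯.card) := by
        rw [Finset.sum_congr rfl hdegT, Finset.sum_const, smul_eq_mul]; ring
      rw [e1, e2] at hcount
      exact Nat.eq_of_mul_eq_mul_left (Nat.succ_pos m) hcount
    exact fibers_eq 𝒯 _ q hle (by rw [hsum, hBcard])

lemma key {α : Type*} [DecidableEq α] (X : Finset α) (𝓑 : Finset (Finset α)) (s q : ℕ)
    (hq : 0 < q) :
    ∀ m : ℕ, ∀ A : Finset α → Finset (Finset α),
      (∀ B ∈ 𝓑, A B ⊆ X.powersetCard s) →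
      (∀ B ∈ 𝓑, (A B).card = m) →
      (∀ T ∈ X.powersetCard s, (𝓑.filter fun B => T ∈ A B).card = m * q) →
      ∃ col : Finset α → Finset α → ℕ,
        (∀ B ∈ 𝓑, ∀ T ∈ A B, col T B < m) ∧
        (∀ B ∈ 𝓑, ∀ i < m, ((A B).filter fun T => col T B = i).card = 1) ∧
        (∀ T ∈ X.powersetCard s, ∀ i < m,
          (𝓑.filter fun B => T ∈ A B ∧ col T B = i).card = q) := by
  intro m
  induction m with
  | zero =>
    intro A _ hdegB _
    refine ⟨fun _ _ => 0, ?_, ?_, ?_⟩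
    · intro B hB T hT
      have h0 := hdegB B hB
      rw [Finset.card_eq_zero] at h0
      rw [h0] at hT
      exact absurd hT (Finset.notMem_empty T)
    · intro B _ i hi; omega
    · intro T _ i hi; omega
  | succ m ih =>
    intro A hA hdegB hdegT
    obtain ⟨g, hg1, hg2⟩ := hall_step X 𝓑 s q m hq A hA hdegB hdegT
    set A' : Finset α → Finset (Finset α) :=
      fun B => if B ∈ 𝓑 then (A B).erase (g B) else A B with hA'def
    have hmem' : ∀ B ∈ 𝓑, ∀ T : Finset α, T ∈ A' B ↔ T ∈ A B ∧ T ≠ g B := by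
      intro B hB T
      simp only [hA'def, if_pos hB, Finset.mem_erase]
      tauto
    have hA'sub : ∀ B ∈ 𝓑, A' B ⊆ X.powersetCard s := by
      intro B hB T hT
      exact hA B hB ((hmem' B hB T).mp hT).1
    have hdegB' : ∀ B ∈ 𝓑, (A' B).card = m := by
      intro B hB
      simp only [hA'def, if_pos hB]
      rw [Finset.card_erase_of_mem (hg1 B hB), hdegB B hB]
      omega
    have hdegT' : ∀ T ∈ X.powersetCard s, (𝓑.filter fun B => T ∈ A' B).card = m * q := by
      intro T hT
      have hsplit : (𝓑.filter fun B => T ∈ A B)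
          = (𝓑.filter fun B => T ∈ A' B) ∪ (𝓑.filter fun B => g B = T) := by
        ext B
        simp only [Finset.mem_union, Finset.mem_filter]
        constructor
        · rintro ⟨hB, hTB⟩
          by_cases hgT : g B = T
          · exact Or.inr ⟨hB, hgT⟩
          · exact Or.inl ⟨hB, (hmem' B hB T).mpr ⟨hTB, fun h => hgT h.symm⟩⟩
        · rintro (⟨hB, hTB⟩ | ⟨hB, hgT⟩)
          · exact ⟨hB, ((hmem' B hB T).mp hTB).1⟩
          · exact ⟨hB, hgT ▸ hg1 B hB⟩
      have hdisj : Disjoint (𝓑.filter fun B => T ∈ A' B) (𝓑.filter fun B => g B = T) := by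
        rw [Finset.disjoint_left]
        intro B h1 h2
        simp only [Finset.mem_filter] at h1 h2
        exact (((hmem' B h1.1 T).mp h1.2).2) h2.2.symm
      have := congrArg Finset.card hsplit
      rw [Finset.card_union_of_disjoint hdisj, hdegT T hT, hg2 T hT, Nat.succ_mul] at this
      omega
    obtain ⟨col', hlt', hB', hT'⟩ := ih A' hA'sub hdegB' hdegT'
    refine ⟨fun T B => if T = g B then m else col' T B, ?_, ?_, ?_⟩
    · intro B hB T hT
      by_cases hTg : T = g B
      · simp [hTg]
      · simp only [if_neg hTg]
        exact Nat.lt_succ_of_lt (hlt' B hB T ((hmem' B hB T).mpr ⟨hT, hTg⟩))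
    · intro B hB i hi
      rcases Nat.lt_succ_iff_lt_or_eq.mp hi with hi' | hieq
      · have : ((A B).filter fun T => (if T = g B then m else col' T B) = i)
            = ((A' B).filter fun T => col' T B = i) := by
          ext T
          simp only [Finset.mem_filter]
          constructor
          · rintro ⟨hTA, hcol⟩
            have hTg : T ≠ g B := by
              intro h; rw [if_pos h] at hcol; omega
            rw [if_neg hTg] at hcol
            exact ⟨(hmem' B hB T).mpr ⟨hTA, hTg⟩, hcol⟩
          · rintro ⟨hTA, hcol⟩
            obtain ⟨hTA2, hTg⟩ := (hmem' B hB T).mp hTA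
            exact ⟨hTA2, by rw [if_neg hTg]; exact hcol⟩
        rw [this]
        exact hB' B hB i hi'
      · simp only [hieq]
        have : ((A B).filter fun T => (if T = g B then m else col' T B) = m) = {g B} := by
          ext T
          simp only [Finset.mem_filter, Finset.mem_singleton]
          constructor
          · rintro ⟨hTA, hcol⟩
            by_contra hTg
            rw [if_neg hTg] at hcol
            exact absurd hcol (Nat.ne_of_lt (hlt' B hB T ((hmem' B hB T).mpr ⟨hTA, hTg⟩)))
          · rintro rfl
            exact ⟨hg1 B hB, by rw [if_pos rfl]⟩
        rw [this, Finset.card_singleton]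
    · intro T hT i hi
      rcases Nat.lt_succ_iff_lt_or_eq.mp hi with hi' | hieq
      · have : (𝓑.filter fun B => T ∈ A B ∧ (if T = g B then m else col' T B) = i)
            = (𝓑.filter fun B => T ∈ A' B ∧ col' T B = i) := by
          ext B
          simp only [Finset.mem_filter]
          constructor
          · rintro ⟨hB, hTA, hcol⟩
            have hTg : T ≠ g B := by
              intro h; rw [if_pos h] at hcol; omega
            rw [if_neg hTg] at hcol
            exact ⟨hB, (hmem' B hB T).mpr ⟨hTA, hTg⟩, hcol⟩
          · rintro ⟨hB, hTA, hcol⟩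
            obtain ⟨hTA2, hTg⟩ := (hmem' B hB T).mp hTA
            exact ⟨hB, hTA2, by rw [if_neg hTg]; exact hcol⟩
        rw [this]
        exact hT' T hT i hi'
      · simp only [hieq]
        have : (𝓑.filter fun B => T ∈ A B ∧ (if T = g B then m else col' T B) = m)
            = (𝓑.filter fun B => g B = T) := by
          ext B
          simp only [Finset.mem_filter]
          constructor
          · rintro ⟨hB, hTA, hcol⟩
            refine ⟨hB, ?_⟩
            by_contra hTg
            have hTg' : T ≠ g B := fun h => hTg h.symm
            rw [if_neg hTg'] at hcol
            exact absurd hcol (Nat.ne_of_lt (hlt' B hB T ((hmem' B hB T).mpr ⟨hTA, hTg'⟩)))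
          · rintro ⟨hB, hgT⟩
            exact ⟨hB, hgT ▸ hg1 B hB, by rw [if_pos hgT.symm]⟩
        rw [this]
        exact hg2 T hT


/-- Let `(X, 𝓑)` be a `t-(v,k,λ)` design, let `s ≤ t` be a positive integer, let `λ_s` denote
the number of blocks through any fixed `s`-element subset of `X`, and suppose `C(k,s)`
divides `λ_s`.  Then there is a coloring `c` of the incident pairs `(T, B)` (with `B ∈ 𝓑`
a block and `T ⊆ B` an `s`-element subset) using `C(k,s)` colors such that:
(i) for each block `B`, the map `T ↦ c T B` is a bijection from the `s`-subsets of `B`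
to the set of colors, and
(ii) for each `s`-element subset `T ⊆ X` and each color `γ`, the number of blocks `B`
containing `T` with `c T B = γ` is exactly `λ_s / C(k,s)`. -/
theorem stmt_5 {α : Type*} [DecidableEq α]
    (X : Finset α) (𝓑 : Finset (Finset α)) (v k t lam : ℕ)
    (hv : X.card = v) (ht : 0 < t) (htk : t ≤ k) (hkv : k ≤ v) (hlam : 0 < lam)
    (hblocks : ∀ B ∈ 𝓑, B ⊆ X ∧ B.card = k)
    (hdesign : ∀ T ⊆ X, T.card = t → (𝓑.filter fun B => T ⊆ B).card = lam)
    (s : ℕ) (hs : 0 < s) (hst : s ≤ t) (lams : ℕ)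
    (hlams : ∀ S : Finset α, S ⊆ X → S.card = s →
      (𝓑.filter fun B => S ⊆ B).card = lams)
    (hdvd : k.choose s ∣ lams) :
    ∃ c : Finset α → Finset α → Fin (k.choose s),
      (∀ B ∈ 𝓑, ∀ γ : Fin (k.choose s),
        ∃! T : Finset α, T ⊆ B ∧ T.card = s ∧ c T B = γ) ∧
      (∀ T : Finset α, T ⊆ X → T.card = s → ∀ γ : Fin (k.choose s),
        (𝓑.filter fun B => T ⊆ B ∧ c T B = γ).card = lams / k.choose s) := by
  classical
  set n := k.choose s with hn
  have hnpos : 0 < n := Nat.choose_pos (le_trans hst htk)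
  -- lams is positive
  have hlamspos : 0 < lams := by
    obtain ⟨S, hSX, hScard⟩ := Finset.exists_subset_card_eq
      (show s ≤ X.card by omega)
    obtain ⟨T, hST, hTX, hTcard⟩ := Finset.exists_subsuperset_card_eq hSX
      (show S.card ≤ t by omega) (show t ≤ X.card by omega)
    have h1 := hdesign T hTX hTcard
    have h2 := hlams S hSX hScard
    have hsub : (𝓑.filter fun B => T ⊆ B) ⊆ (𝓑.filter fun B => S ⊆ B) := by
      intro B hB
      rw [Finset.mem_filter] at hB ⊢
      exact ⟨hB.1, hST.trans hB.2⟩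
    have := Finset.card_le_card hsub
    omega
  set q := lams / n with hqdef
  have hq : 0 < q := Nat.div_pos (Nat.le_of_dvd hlamspos hdvd) hnpos
  have hnq : n * q = lams := Nat.mul_div_cancel' hdvd
  set A : Finset α → Finset (Finset α) := fun B => B.powersetCard s with hAdef
  have hA : ∀ B ∈ 𝓑, A B ⊆ X.powersetCard s := fun B hB =>
    Finset.powersetCard_mono (hblocks B hB).1
  have hdegB : ∀ B ∈ 𝓑, (A B).card = n := by
    intro B hB
    rw [hAdef]
    simp only [Finset.card_powersetCard, (hblocks B hB).2, hn]
  have hdegT : ∀ T ∈ X.powersetCard s, (𝓑.filter fun B => T ∈ A B).card = n * q := by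
    intro T hT
    obtain ⟨hTX, hTcard⟩ := Finset.mem_powersetCard.mp hT
    rw [hnq, ← hlams T hTX hTcard]
    refine congrArg Finset.card (Finset.filter_congr ?_)
    intro B _
    simp only [hAdef, Finset.mem_powersetCard, hTcard, and_true]
  obtain ⟨col, hcollt, hcolB, hcolT⟩ := key X 𝓑 s q hq n A hA hdegB hdegT
  refine ⟨fun T B => ⟨col T B % n, Nat.mod_lt _ hnpos⟩, ?_, ?_⟩
  · intro B hB γ
    have h1 := hcolB B hB γ.1 γ.2
    obtain ⟨a, ha⟩ := Finset.card_eq_one.mp h1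
    have hmem : ∀ T : Finset α, (T ∈ A B ∧ col T B = γ.1) ↔ T = a := by
      intro T
      constructor
      · intro h
        have h' : T ∈ (A B).filter fun T => col T B = γ.1 := Finset.mem_filter.mpr h
        rw [ha] at h'
        exact Finset.mem_singleton.mp h'
      · rintro rfl
        have h' := Finset.mem_singleton_self T
        rw [← ha, Finset.mem_filter] at h'
        exact h'
    have key_iff : ∀ T : Finset α,
        (T ⊆ B ∧ T.card = s ∧ (⟨col T B % n, Nat.mod_lt _ hnpos⟩ : Fin n) = γ) ↔ T = a := by
      intro T
      rw [← hmem T]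
      constructor
      · rintro ⟨hTB, hTcard, hcfin⟩
        have hTA : T ∈ A B := Finset.mem_powersetCard.mpr ⟨hTB, hTcard⟩
        have hlt := hcollt B hB T hTA
        have : col T B % n = γ.1 := congrArg Fin.val hcfin
        rw [Nat.mod_eq_of_lt hlt] at this
        exact ⟨hTA, this⟩
      · rintro ⟨hTA, hcol⟩
        obtain ⟨hTB, hTcard⟩ := Finset.mem_powersetCard.mp hTA
        have hlt := hcollt B hB T hTA
        refine ⟨hTB, hTcard, ?_⟩
        apply Fin.ext
        show col T B % n = γ.1
        rw [Nat.mod_eq_of_lt hlt]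
        exact hcol
    exact ⟨a, (key_iff a).mpr rfl, fun T hT => (key_iff T).mp hT⟩
  · intro T hTX hTcard γ
    have hT𝒯 : T ∈ X.powersetCard s := Finset.mem_powersetCard.mpr ⟨hTX, hTcard⟩
    have h1 := hcolT T hT𝒯 γ.1 γ.2
    rw [← h1]
    refine congrArg Finset.card (Finset.filter_congr ?_)
    intro B hB
    constructor
    · rintro ⟨hTB, hcfin⟩
      have hTA : T ∈ A B := Finset.mem_powersetCard.mpr ⟨hTB, hTcard⟩
      have hlt := hcollt B hB T hTA
      have : col T B % n = γ.1 := congrArg Fin.val hcfin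
      rw [Nat.mod_eq_of_lt hlt] at this
      exact ⟨hTA, this⟩
    · rintro ⟨hTA, hcol⟩
      obtain ⟨hTB, _⟩ := Finset.mem_powersetCard.mp hTA
      have hlt := hcollt B hB T hTA
      refine ⟨hTB, ?_⟩
      apply Fin.ext
      show col T B % n = γ.1
      rw [Nat.mod_eq_of_lt hlt]
      exact hcol
end

section
/- Let $\mathcal{S}$ be a finite set of $k$ source states, $\mathcal{M}$ a finite set of messages, and $\mathcal{E}$ a finite set of $b$ encoding rules, each an injective map $e \colon \mathcal{S} \to \mathcal{M}$; write $M(e) = e(\mathcal{S})$ and, for $M^* \subseteq M(e)$, $f_e(M^*) = \{s \in \mathcal{S} : e(s) \in M^*\}$. Suppose both the encoding rules and the $t^*$-element subsets of source states are equiprobable, i.e. $p_E(e) = 1/b$ for all $e$ and $p_S(S') = 1/\binom{k}{t^*}$ for every $t^*$-element subset $S' \subseteq \mathcal{S}$. Then the secrecy condition $$\sum_{\{e : S^* = f_e(M^*)\}} p_E(e) = \sum_{\{e : M^* \subseteq M(e)\}} p_E(e)\, p_S(f_e(M^*))$$ holds for all $t^*$-element subsets $M^* \subseteq \mathcal{M}$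 and $S^* \subseteq \mathcal{S}$ if and only if for every $t^*$-element subset $M^* \subseteq \mathcal{M}$, the number of encoding rules $e$ with $M^* \subseteq M(e)$ and $f_e(M^*) = S^*$ is the same for all $t^*$-element subsets $S^* \subseteq \mathcal{S}$. -/
/-- `𝓢` is a finite set of `k` source states, `𝓜` a finite set of messages, `𝓔` a finite set
of `b` encoding rules (injections `𝓢 → 𝓜`); `M(e) = e(𝓢)` and `f_e(M*) = {s : e s ∈ M*}`.
Suppose encoding rules and `t*`-subsets of source states are equiprobable:
`p_E e = 1/b` and `p_S S' = 1/C(k,t*)` for every `t*`-subset `S'`.  Then the secrecy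
condition `∑_{e : S* = f_e(M*)} p_E e = ∑_{e : M* ⊆ M(e)} p_E e * p_S (f_e M*)` holds
for all `t*`-subsets `M* ⊆ 𝓜` and `S* ⊆ 𝓢` iff for every `t*`-subset `M* ⊆ 𝓜`, the
number of encoding rules `e` with `M* ⊆ M(e)` and `f_e(M*) = S*` is the same for all
`t*`-subsets `S* ⊆ 𝓢`. -/
theorem stmt_11 {𝓢 𝓜 : Type*} [Fintype 𝓢] [Fintype 𝓜] [DecidableEq 𝓢] [DecidableEq 𝓜]
    (𝓔 : Finset (𝓢 → 𝓜)) (h𝓔 : 𝓔.Nonempty) (hinj : ∀ e ∈ 𝓔, Function.Injective e)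
    (k : ℕ) (hk : Fintype.card 𝓢 = k) (b : ℕ) (hb : 𝓔.card = b)
    (tstar : ℕ) (htstar : 0 < tstar)
    (pE : (𝓢 → 𝓜) → ℝ) (hpE : ∀ e ∈ 𝓔, pE e = 1 / (b : ℝ))
    (pS : Finset 𝓢 → ℝ)
    (hpS : ∀ S' : Finset 𝓢, S'.card = tstar → pS S' = 1 / (k.choose tstar : ℝ)) :
    (∀ Mstar : Finset 𝓜, Mstar.card = tstar →
      ∀ Sstar : Finset 𝓢, Sstar.card = tstar →
        (∑ e ∈ 𝓔.filter (fun e => Sstar = Finset.univ.filter fun s => e s ∈ Mstar), pE e)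
          = ∑ e ∈ 𝓔.filter (fun e => Mstar ⊆ Finset.univ.image e),
              pE e * pS (Finset.univ.filter fun s => e s ∈ Mstar))
    ↔ (∀ Mstar : Finset 𝓜, Mstar.card = tstar →
        ∀ S₁ S₂ : Finset 𝓢, S₁.card = tstar → S₂.card = tstar →
          (𝓔.filter fun e => Mstar ⊆ Finset.univ.image e ∧
              (Finset.univ.filter fun s => e s ∈ Mstar) = S₁).card
          = (𝓔.filter fun e => Mstar ⊆ Finset.univ.image e ∧
              (Finset.univ.filter fun s => e s ∈ Mstar) = S₂).card) := by
  have hbpos : 0 < b := hb ▸ Finset.card_pos.mpr h𝓔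
  have hbR : (b : ℝ) ≠ 0 := Nat.cast_ne_zero.mpr hbpos.ne'
  -- If `M* ⊆ M(e)` then `f_e(M*)` has the same cardinality as `M*`.
  have lemB : ∀ e ∈ 𝓔, ∀ Mstar : Finset 𝓜, Mstar ⊆ Finset.univ.image e →
      (Finset.univ.filter fun s => e s ∈ Mstar).card = Mstar.card := by
    intro e he Mstar hsub
    have himg : Finset.image e (Finset.univ.filter fun s => e s ∈ Mstar) = Mstar := by
      apply Finset.Subset.antisymm
      · intro m hm
        simp only [Finset.mem_image, Finset.mem_filter] at hm
        obtain ⟨s, ⟨_, hs⟩, rfl⟩ := hm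
        exact hs
      · intro m hm
        obtain ⟨s, _, rfl⟩ := Finset.mem_image.mp (hsub hm)
        exact Finset.mem_image.mpr ⟨s, Finset.mem_filter.mpr ⟨Finset.mem_univ s, hm⟩, rfl⟩
    calc (Finset.univ.filter fun s => e s ∈ Mstar).card
        = (Finset.image e (Finset.univ.filter fun s => e s ∈ Mstar)).card :=
          (Finset.card_image_of_injective _ (hinj e he)).symm
      _ = Mstar.card := by rw [himg]
  -- the two filter conditions agree
  have lemA : ∀ e ∈ 𝓔, ∀ Mstar : Finset 𝓜, Mstar.card = tstar →
      ∀ Sstar : Finset 𝓢, Sstar.card = tstar →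
      ((Sstar = Finset.univ.filter fun s => e s ∈ Mstar) ↔
        (Mstar ⊆ Finset.univ.image e ∧
          (Finset.univ.filter fun s => e s ∈ Mstar) = Sstar)) := by
    intro e he Mstar hM Sstar hS
    constructor
    · intro h
      have hcard : (Finset.univ.filter fun s => e s ∈ Mstar).card = tstar := by
        rw [← h]; exact hS
      have hsub : Finset.image e (Finset.univ.filter fun s => e s ∈ Mstar) ⊆ Mstar := by
        intro m hm
        simp only [Finset.mem_image, Finset.mem_filter] at hm
        obtain ⟨s, ⟨_, hs⟩, rfl⟩ := hm
        exact hs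
      have hcard2 : Mstar.card ≤
          (Finset.image e (Finset.univ.filter fun s => e s ∈ Mstar)).card := by
        rw [Finset.card_image_of_injective _ (hinj e he), hcard, hM]
      have heq : Finset.image e (Finset.univ.filter fun s => e s ∈ Mstar) = Mstar :=
        Finset.eq_of_subset_of_card_le hsub hcard2
      refine ⟨?_, h.symm⟩
      rw [← heq]
      exact Finset.image_subset_image (Finset.subset_univ _)
    · rintro ⟨_, h⟩
      exact h.symm
  -- left sum
  have sumL : ∀ Mstar : Finset 𝓜, Mstar.card = tstar → ∀ Sstar : Finset 𝓢,
      Sstar.card = tstar →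
      (∑ e ∈ 𝓔.filter (fun e => Sstar = Finset.univ.filter fun s => e s ∈ Mstar), pE e)
      = ((𝓔.filter fun e => Mstar ⊆ Finset.univ.image e ∧
            (Finset.univ.filter fun s => e s ∈ Mstar) = Sstar).card : ℝ) * (1 / b) := by
    intro Mstar hM Sstar hS
    have hfe : 𝓔.filter (fun e => Sstar = Finset.univ.filter fun s => e s ∈ Mstar)
        = 𝓔.filter (fun e => Mstar ⊆ Finset.univ.image e ∧
            (Finset.univ.filter fun s => e s ∈ Mstar) = Sstar) :=
      Finset.filter_congr (fun e he => by simpa using lemA e he Mstar hM Sstar hS)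
    rw [hfe,
      Finset.sum_congr rfl (fun e he => hpE e (Finset.mem_filter.mp he).1),
      Finset.sum_const, nsmul_eq_mul]
  -- right sum
  have sumR : ∀ Mstar : Finset 𝓜, Mstar.card = tstar →
      (∑ e ∈ 𝓔.filter (fun e => Mstar ⊆ Finset.univ.image e),
          pE e * pS (Finset.univ.filter fun s => e s ∈ Mstar))
      = ((𝓔.filter fun e => Mstar ⊆ Finset.univ.image e).card : ℝ)
          * (1 / b * (1 / (k.choose tstar : ℝ))) := by
    intro Mstar hM
    have hterm : ∀ e ∈ 𝓔.filter (fun e => Mstar ⊆ Finset.univ.image e),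
        pE e * pS (Finset.univ.filter fun s => e s ∈ Mstar)
          = 1 / b * (1 / (k.choose tstar : ℝ)) := by
      intro e he
      have he' := Finset.mem_filter.mp he
      rw [hpE e he'.1, hpS _ (by rw [lemB e he'.1 Mstar he'.2, hM])]
    rw [Finset.sum_congr rfl hterm, Finset.sum_const, nsmul_eq_mul]
  -- partition of the rules with `M* ⊆ M(e)` by the value of `f_e(M*)`
  have part : ∀ Mstar : Finset 𝓜, Mstar.card = tstar →
      (𝓔.filter fun e => Mstar ⊆ Finset.univ.image e).card
      = ∑ S' ∈ Finset.powersetCard tstar (Finset.univ : Finset 𝓢),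
          (𝓔.filter fun e => Mstar ⊆ Finset.univ.image e ∧
            (Finset.univ.filter fun s => e s ∈ Mstar) = S').card := by
    intro Mstar hM
    rw [Finset.card_eq_sum_card_fiberwise
      (f := fun e => Finset.univ.filter fun s => e s ∈ Mstar)
      (t := Finset.powersetCard tstar (Finset.univ : Finset 𝓢)) ?_]
    · exact Finset.sum_congr rfl (fun S' _ => by rw [Finset.filter_filter])
    · intro e he
      have he' := Finset.mem_filter.mp he
      exact Finset.mem_powersetCard.mpr
        ⟨Finset.subset_univ _, by rw [lemB e he'.1 Mstar he'.2, hM]⟩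
  constructor
  · intro H Mstar hM S₁ S₂ h1 h2
    have e1 := H Mstar hM S₁ h1
    have e2 := H Mstar hM S₂ h2
    rw [sumL Mstar hM S₁ h1, sumR Mstar hM] at e1
    rw [sumL Mstar hM S₂ h2, sumR Mstar hM] at e2
    have := mul_right_cancel₀ (one_div_ne_zero hbR) (e1.trans e2.symm)
    exact_mod_cast this
  · intro H Mstar hM Sstar hS
    have htk : tstar ≤ k := by rw [← hk]; exact hS ▸ Finset.card_le_univ Sstar
    have hC : ((k.choose tstar : ℕ) : ℝ) ≠ 0 :=
      Nat.cast_ne_zero.mpr (Nat.choose_pos htk).ne'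
    rw [sumL Mstar hM Sstar hS, sumR Mstar hM]
    have hn : (𝓔.filter fun e => Mstar ⊆ Finset.univ.image e).card
        = (k.choose tstar) * (𝓔.filter fun e => Mstar ⊆ Finset.univ.image e ∧
            (Finset.univ.filter fun s => e s ∈ Mstar) = Sstar).card := by
      rw [part Mstar hM,
        Finset.sum_congr rfl (fun S' hS' => H Mstar hM S' Sstar
          (Finset.mem_powersetCard.mp hS').2 hS),
        Finset.sum_const, Finset.card_powersetCard, Finset.card_univ, hk, smul_eq_mul]
    rw [hn]
    push_cast
    field_simp
end
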